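/- For any n-type ν on a finite alphabet of m letters and any source q with all q_i > 0, the type probability satisfies (n+1)^{-m} · exp(-n·I(ν‖q)) ≤ π(ν; q) ≤ exp(-n·I(ν‖q)), where I(p‖q) = ∑ p_i log(p_i/q_i) is the Kullback–Leibler divergence. -/
import Mathlib


open Real Filter Topology Finset

/-- A probability mass function on `Fin m`. -/
def IsPMF {m : ℕ} (p : Fin m → ℝ) : Prop := (∀ i, 0 ≤ p i) ∧ ∑ i, p i = 1

/-- An `n`-type: a pmf whose entries are integer multiples of `1/n`. -/
def IsType {m : ℕ} (n : ℕ) (ν : Fin m → ℝ) : Prop :=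
  IsPMF ν ∧ ∀ i, ∃ k : ℕ, ν i = (k : ℝ) / n

/-- Multiplicity `Γ(ν) = n! / ∏ (n νᵢ)!` of an `n`-type. -/
noncomputable def mult {m : ℕ} (n : ℕ) (ν : Fin m → ℝ) : ℝ :=
  (n.factorial : ℝ) / ∏ i, (Nat.factorial ⌊(n : ℝ) * ν i⌋₊ : ℝ)

/-- Probability `π(ν; q) = Γ(ν) ∏ qᵢ^{n νᵢ}` of the type `ν` in `n` iid draws from `q`. -/
noncomputable def typeProb {m : ℕ} (n : ℕ) (ν q : Fin m → ℝ) : ℝ :=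
  mult n ν * ∏ i, q i ^ ((n : ℝ) * ν i)

/-- Kullback–Leibler divergence (with `0 log 0 = 0`, automatic since `Real.log 0 = 0`). -/
noncomputable def KL {m : ℕ} (p q : Fin m → ℝ) : ℝ := ∑ i, p i * Real.log (p i / q i)

/-- Shannon entropy. -/
noncomputable def entH {m : ℕ} (ν : Fin m → ℝ) : ℝ := -∑ i, ν i * Real.log (ν i)

/-- Total variation metric `d(a,b) = ∑ |aᵢ - bᵢ|`. -/
noncomputable def tv {m : ℕ} (a b : Fin m → ℝ) : ℝ := ∑ i, |a i - b i|

/-- The finite set of all `n`-types on `Fin m`. -/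
noncomputable def typeFinset (n m : ℕ) : Finset (Fin m → ℝ) := by
  classical
  exact ((Fintype.piFinset (fun _ : Fin m => Finset.range (n + 1))).filter
      (fun k => ∑ i, k i = n)).image (fun k i => (k i : ℝ) / n)

open scoped Classical in
/-- Conditional probability that the empirical `n`-type lies in `A`, given it lies in `B`;
expressed as a ratio of type-probability sums. -/
noncomputable def condProb {m : ℕ} (n : ℕ) (q : Fin m → ℝ)
    (A B : Set (Fin m → ℝ)) : ℝ :=
  (∑ ν ∈ (typeFinset n m).filter (fun ν => ν ∈ A ∩ B), typeProb n ν q) /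
  (∑ ν ∈ (typeFinset n m).filter (fun ν => ν ∈ B), typeProb n ν q)

/-- For any n-type ν and strictly positive source q,
(n+1)^{-m} exp(-n I(ν‖q)) ≤ π(ν; q) ≤ exp(-n I(ν‖q)). -/
private lemma fact_le_fact_mul_pow (l d : ℕ) :
    (l + d).factorial ≤ l.factorial * (l + d) ^ d := by
  induction d with
  | zero => simp
  | succ d ih =>
    have h1 : (l + (d + 1)).factorial = (l + d + 1) * (l + d).factorial := by
      rw [← Nat.add_assoc]; exact Nat.factorial_succ _
    rw [h1]
    calc (l + d + 1) * (l + d).factorial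
        ≤ (l + d + 1) * (l.factorial * (l + d) ^ d) := Nat.mul_le_mul_left _ ih
      _ ≤ (l + d + 1) * (l.factorial * (l + d + 1) ^ d) :=
          Nat.mul_le_mul_left _ (Nat.mul_le_mul_left _ (Nat.pow_le_pow_left (Nat.le_succ _) d))
      _ = l.factorial * (l + (d + 1)) ^ (d + 1) := by ring

private lemma fact_pow_aux (k l : ℕ) :
    k.factorial * k ^ l ≤ l.factorial * k ^ k := by
  rcases le_total k l with h | h
  · obtain ⟨d, rfl⟩ := Nat.exists_eq_add_of_le h
    calc k.factorial * k ^ (k + d) = k.factorial * k ^ d * k ^ k := by ring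
      _ ≤ k.factorial * (k + 1) ^ d * k ^ k :=
          Nat.mul_le_mul_right _ (Nat.mul_le_mul_left _ (Nat.pow_le_pow_left (Nat.le_succ _) d))
      _ ≤ (k + d).factorial * k ^ k :=
          Nat.mul_le_mul_right _ Nat.factorial_mul_pow_le_factorial
  · obtain ⟨d, rfl⟩ := Nat.exists_eq_add_of_le h
    calc (l + d).factorial * (l + d) ^ l
        ≤ l.factorial * (l + d) ^ d * (l + d) ^ l :=
          Nat.mul_le_mul_right _ (fact_le_fact_mul_pow l d)
      _ = l.factorial * (l + d) ^ (l + d) := by ring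

theorem stmt2 {m n : ℕ} (ν q : Fin m → ℝ) (hν : IsType n ν)
    (hq : IsPMF q) (hqpos : ∀ i, 0 < q i) :
    (((n : ℝ) + 1) ^ m)⁻¹ * Real.exp (-(n : ℝ) * KL ν q) ≤ typeProb n ν q ∧
      typeProb n ν q ≤ Real.exp (-(n : ℝ) * KL ν q) := by
  classical
  obtain ⟨⟨hν0, hν1⟩, hνt⟩ := hν
  choose k hk using hνt
  rcases Nat.eq_zero_or_pos n with hn0 | hnpos
  · exfalso; subst hn0; simp [hk] at hν1
  have hn : (0:ℝ) < (n:ℝ) := by exact_mod_cast hnpos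
  have hnne : (n:ℝ) ≠ 0 := ne_of_gt hn
  -- basic facts about k
  have hnν : ∀ i, (n:ℝ) * ν i = (k i : ℝ) := by
    intro i; rw [hk i]; field_simp
  have hsumk : ∑ i, (k i : ℝ) = (n:ℝ) := by
    have h := hν1
    simp_rw [hk] at h
    rw [← Finset.sum_div, div_eq_one_iff_eq hnne] at h
    exact h
  have hsumkn : ∑ i, k i = n := by
    have : ((∑ i, k i : ℕ) : ℝ) = (n:ℝ) := by push_cast; exact hsumk
    exact_mod_cast this
  have hνnonneg : ∀ i, 0 ≤ ν i := hν0
  have hνpos_of_k : ∀ i, k i ≠ 0 → 0 < ν i := by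
    intro i hki
    rw [hk i]
    have : (0:ℝ) < (k i : ℝ) := by exact_mod_cast Nat.pos_of_ne_zero hki
    positivity
  have hνzero_of_k : ∀ i, k i = 0 → ν i = 0 := by
    intro i hki; rw [hk i, hki]; simp
  -- the multinomial coefficient
  have hprodfact_pos : (0:ℝ) < ∏ i, ((k i).factorial : ℝ) :=
    Finset.prod_pos fun i _ => by positivity
  have hmultinom : (Nat.multinomial Finset.univ k : ℝ)
      = (n.factorial : ℝ) / ∏ i, ((k i).factorial : ℝ) := by
    have hspec := Nat.multinomial_spec Finset.univ k
    rw [hsumkn] at hspec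
    rw [eq_div_iff (ne_of_gt hprodfact_pos), mul_comm]
    exact_mod_cast congrArg (Nat.cast (R := ℝ)) hspec
  -- T l = probability of type l under source ν
  set T : (Fin m → ℕ) → ℝ :=
    fun l => (Nat.multinomial Finset.univ l : ℝ) * ∏ i, ν i ^ l i with hT
  have hTnonneg : ∀ l, 0 ≤ T l := by
    intro l
    exact mul_nonneg (Nat.cast_nonneg _)
      (Finset.prod_nonneg fun i _ => pow_nonneg (hνnonneg i) _)
  have hsum1 : ∑ l ∈ Finset.piAntidiag Finset.univ n, T l = 1 := by
    have h := Finset.sum_pow_eq_sum_piAntidiag Finset.univ ν n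
    rw [hν1, one_pow] at h
    exact h.symm
  have hkmem : k ∈ Finset.piAntidiag Finset.univ n := by
    rw [Finset.mem_piAntidiag]
    exact ⟨hsumkn, fun i _ => Finset.mem_univ i⟩
  -- closed form of T l for l in the antidiagonal
  have hTform : ∀ l ∈ Finset.piAntidiag Finset.univ n,
      T l = (n.factorial : ℝ) * (∏ i, (k i : ℝ) ^ l i)
        / ((∏ i, ((l i).factorial : ℝ)) * (n:ℝ) ^ n) := by
    intro l hl
    rw [Finset.mem_piAntidiag] at hl
    obtain ⟨hlsum, -⟩ := hl
    have hlfact_pos : (0:ℝ) < ∏ i, ((l i).factorial : ℝ) :=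
      Finset.prod_pos fun i _ => by positivity
    have hlmult : (Nat.multinomial Finset.univ l : ℝ)
        = (n.factorial : ℝ) / ∏ i, ((l i).factorial : ℝ) := by
      have hspec := Nat.multinomial_spec Finset.univ l
      rw [hlsum] at hspec
      rw [eq_div_iff (ne_of_gt hlfact_pos), mul_comm]
      exact_mod_cast congrArg (Nat.cast (R := ℝ)) hspec
    have hprodν : ∏ i, ν i ^ l i = (∏ i, (k i : ℝ) ^ l i) / (n:ℝ) ^ n := by
      have : ∀ i, ν i ^ l i = (k i : ℝ) ^ l i / (n:ℝ) ^ l i := by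
        intro i; rw [hk i, div_pow]
      simp_rw [this]
      rw [Finset.prod_div_distrib, Finset.prod_pow_eq_pow_sum, hlsum]
    rw [hT]
    simp only
    rw [hlmult, hprodν]
    field_simp
  -- T l ≤ T k for all l in the antidiagonal
  have hTmax : ∀ l ∈ Finset.piAntidiag Finset.univ n, T l ≤ T k := by
    intro l hl
    rw [hTform l hl, hTform k hkmem]
    have hnpow : (0:ℝ) < (n:ℝ) ^ n := by positivity
    have hlfact_pos : (0:ℝ) < ∏ i, ((l i).factorial : ℝ) :=
      Finset.prod_pos fun i _ => by positivity
    rw [div_le_div_iff₀ (by positivity) (by positivity)]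
    have hkey : (∏ i, ((k i).factorial * k i ^ l i))
        ≤ ∏ i, ((l i).factorial * k i ^ k i) :=
      Finset.prod_le_prod' fun i _ => fact_pow_aux (k i) (l i)
    have hkeyR : (∏ i, ((k i).factorial : ℝ) * (k i : ℝ) ^ l i)
        ≤ ∏ i, ((l i).factorial : ℝ) * (k i : ℝ) ^ k i := by
      have := (Nat.cast_le (α := ℝ)).mpr hkey
      push_cast at this
      convert this using 2 <;> simp
    rw [Finset.prod_mul_distrib] at hkeyR
    rw [Finset.prod_mul_distrib] at hkeyR
    have hfac : (0:ℝ) ≤ (n.factorial : ℝ) := Nat.cast_nonneg _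
    calc (n.factorial : ℝ) * (∏ i, (k i : ℝ) ^ l i)
          * ((∏ i, ((k i).factorial : ℝ)) * (n:ℝ) ^ n)
        = ((n.factorial : ℝ) * (n:ℝ) ^ n)
          * ((∏ i, ((k i).factorial : ℝ)) * ∏ i, (k i : ℝ) ^ l i) := by ring
      _ ≤ ((n.factorial : ℝ) * (n:ℝ) ^ n)
          * ((∏ i, ((l i).factorial : ℝ)) * ∏ i, (k i : ℝ) ^ k i) := by
          apply mul_le_mul_of_nonneg_left hkeyR (by positivity)
      _ = (n.factorial : ℝ) * (∏ i, (k i : ℝ) ^ k i)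
          * ((∏ i, ((l i).factorial : ℝ)) * (n:ℝ) ^ n) := by ring
  -- cardinality bound
  have hcard : (Finset.piAntidiag (Finset.univ : Finset (Fin m)) n).card ≤ (n + 1) ^ m := by
    have hsub : Finset.piAntidiag Finset.univ n
        ⊆ Fintype.piFinset (fun _ : Fin m => Finset.range (n + 1)) := by
      intro l hl
      rw [Finset.mem_piAntidiag] at hl
      rw [Fintype.mem_piFinset]
      intro i
      rw [Finset.mem_range]
      have h1 : l i ≤ ∑ j, l j := Finset.single_le_sum (fun j _ => Nat.zero_le _) (Finset.mem_univ i)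
      exact Nat.lt_succ_of_le (le_trans h1 (le_of_eq hl.1))
    calc (Finset.piAntidiag Finset.univ n).card
        ≤ (Fintype.piFinset (fun _ : Fin m => Finset.range (n + 1))).card :=
          Finset.card_le_card hsub
      _ = (n + 1) ^ m := by simp [Fintype.card_piFinset]
  -- bounds on T k
  have hTk_le_one : T k ≤ 1 := by
    rw [← hsum1]
    exact Finset.single_le_sum (fun l _ => hTnonneg l) hkmem
  have hTk_lower : (((n:ℝ) + 1) ^ m)⁻¹ ≤ T k := by
    have hpos : (0:ℝ) < ((n:ℝ) + 1) ^ m := by positivity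
    rw [inv_eq_one_div, div_le_iff₀ hpos]
    calc (1:ℝ) = ∑ l ∈ Finset.piAntidiag Finset.univ n, T l := hsum1.symm
      _ ≤ ∑ _l ∈ Finset.piAntidiag Finset.univ n, T k :=
          Finset.sum_le_sum fun l hl => hTmax l hl
      _ = (Finset.piAntidiag Finset.univ n).card * T k := by
          rw [Finset.sum_const, nsmul_eq_mul]
      _ ≤ ((n:ℝ) + 1) ^ m * T k := by
          apply mul_le_mul_of_nonneg_right _ (hTnonneg k)
          have : (((n + 1) ^ m : ℕ) : ℝ) = ((n:ℝ) + 1) ^ m := by push_cast; ring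
          rw [← this]
          exact_mod_cast hcard
      _ = T k * ((n:ℝ) + 1) ^ m := by ring
  -- the exponential identity
  have hexp : Real.exp (-(n:ℝ) * KL ν q) = ∏ i, (q i / ν i) ^ k i := by
    have hKL : -(n:ℝ) * KL ν q = ∑ i, (k i : ℝ) * Real.log (q i / ν i) := by
      rw [KL, Finset.mul_sum]
      apply Finset.sum_congr rfl
      intro i _
      rcases Nat.eq_zero_or_pos (k i) with hki | hki
      · rw [hνzero_of_k i hki, hki]
        simp
      · have hνi : 0 < ν i := hνpos_of_k i (by omega)
        have hlog : Real.log (ν i / q i) = -Real.log (q i / ν i) := by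
          rw [Real.log_div (ne_of_gt hνi) (ne_of_gt (hqpos i)),
            Real.log_div (ne_of_gt (hqpos i)) (ne_of_gt hνi)]
          ring
        rw [hlog, ← hnν i]
        ring
    rw [hKL, Real.exp_sum]
    apply Finset.prod_congr rfl
    intro i _
    rcases Nat.eq_zero_or_pos (k i) with hki | hki
    · rw [hki]; simp
    · have hνi : 0 < ν i := hνpos_of_k i (by omega)
      have hpos : 0 < q i / ν i := div_pos (hqpos i) hνi
      rw [Real.exp_nat_mul, Real.exp_log hpos]
  -- the main identity: typeProb = T k * exp(-n KL)
  have hmain : typeProb n ν q = T k * Real.exp (-(n:ℝ) * KL ν q) := by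
    have hfloor : ∀ i, ⌊(n:ℝ) * ν i⌋₊ = k i := by
      intro i; rw [hnν i, Nat.floor_natCast]
    have hmult : mult n ν = (n.factorial : ℝ) / ∏ i, ((k i).factorial : ℝ) := by
      rw [mult]
      congr 1
      exact Finset.prod_congr rfl fun i _ => by rw [hfloor i]
    have hrpow : ∀ i, q i ^ ((n:ℝ) * ν i) = q i ^ (k i) := by
      intro i; rw [hnν i, Real.rpow_natCast]
    have hsplit : ∀ i, (q i : ℝ) ^ k i = ν i ^ k i * (q i / ν i) ^ k i := by
      intro i
      rcases Nat.eq_zero_or_pos (k i) with hki | hki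
      · rw [hki]; simp
      · have hνi : 0 < ν i := hνpos_of_k i (by omega)
        rw [← mul_pow, mul_div_cancel₀ _ (ne_of_gt hνi)]
    rw [typeProb, hmult, hexp, hT]
    simp only
    rw [hmultinom]
    rw [Finset.prod_congr rfl fun i _ => hrpow i,
      Finset.prod_congr rfl fun i _ => hsplit i, Finset.prod_mul_distrib]
    ring
  -- conclude
  have hE : 0 < Real.exp (-(n:ℝ) * KL ν q) := Real.exp_pos _
  constructor
  · rw [hmain]
    exact mul_le_mul_of_nonneg_right hTk_lower hE.le
  · rw [hmain]
    calc T k * Real.exp (-(n:ℝ) * KL ν q)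
        ≤ 1 * Real.exp (-(n:ℝ) * KL ν q) :=
          mul_le_mul_of_nonneg_right hTk_le_one hE.le
      _ = Real.exp (-(n:ℝ) * KL ν q) := one_mul _
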